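/- Let ξ < 0, μ ∈ ℝ, σ > 0, k > 0, and let X be a positive random variable with distribution function L_{1,ξ}(·; μ, σ). Then the k-th moment of X exists and E(X^k) = e^{k(μ − σ/ξ)} · M_Y(kσ/|ξ|; 1/|ξ|), where M_Y(t; α) = α ∫_0^∞ x^{α−1} exp(−t x − x^α) dx. -/

import Mathlib

open MeasureTheory Filter Real Set Topology

/-- The log-GEV distribution function `L_{1,ξ}(x; μ, σ)` (positive support). -/
noncomputable def L1 (ξ μ σ x : ℝ) : ℝ :=
  if 0 < x then
    if 0 < 1 + (ξ / σ) * Real.log (Real.exp (-μ) * x) then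
      Real.exp (-(1 + (ξ / σ) * Real.log (Real.exp (-μ) * x)) ^ (-1 / ξ))
    else if 0 < ξ then 0 else 1
  else 0

/-- The negative log-GEV distribution function `L_{2,ξ}(x; μ, σ)` (negative support). -/
noncomputable def L2 (ξ μ σ x : ℝ) : ℝ :=
  if x < 0 then
    if 0 < 1 - (ξ / σ) * Real.log (Real.exp (-μ) * |x|) then
      Real.exp (-(1 - (ξ / σ) * Real.log (Real.exp (-μ) * |x|)) ^ (-1 / ξ))
    else if 0 < ξ then 0 else 1
  else 1

/-- `M_Y(t; α) = α ∫_0^∞ x^{α-1} exp(-t x - x^α) dx`, the value at `-t` of the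
moment generating function of a standard Weibull random variable with shape `α`. -/
noncomputable def weibullMgf (t α : ℝ) : ℝ :=
  α * ∫ x in Set.Ioi (0 : ℝ), x ^ (α - 1) * Real.exp (-t * x - x ^ α)

lemma g1_int {t₀ α : ℝ} (ht₀ : 0 < t₀) (hα : 0 < α) :
    IntegrableOn (fun x : ℝ => t₀ * Real.exp (-t₀ * x) * (1 - Real.exp (-(x ^ α)))) (Ioi 0) := by
  refine Integrable.mono' ((exp_neg_integrableOn_Ioi 0 ht₀).const_mul t₀) ?_ ?_
  · apply Measurable.aestronglyMeasurable
    fun_prop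
  · rw [ae_restrict_iff' measurableSet_Ioi]
    filter_upwards with x hx
    have h1 : Real.exp (-(x ^ α)) ≤ 1 := by
      rw [Real.exp_le_one_iff]
      simp [Real.rpow_nonneg (le_of_lt hx)]
    have h2 : (0:ℝ) < Real.exp (-(x ^ α)) := Real.exp_pos _
    have h3 : (0:ℝ) < Real.exp (-t₀ * x) := Real.exp_pos _
    have h4 : (0:ℝ) ≤ 1 - Real.exp (-(x ^ α)) := by linarith
    rw [norm_eq_abs, abs_of_nonneg (by positivity)]
    calc t₀ * Real.exp (-t₀ * x) * (1 - Real.exp (-(x ^ α)))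
        ≤ t₀ * Real.exp (-t₀ * x) * 1 := by
          apply mul_le_mul_of_nonneg_left (by linarith) (by positivity)
      _ = t₀ * Real.exp (-t₀ * x) := mul_one _

lemma g2_int {t₀ α : ℝ} (ht₀ : 0 < t₀) (hα : 0 < α) :
    IntegrableOn (fun x : ℝ => α * (x ^ (α - 1) * Real.exp (-t₀ * x - x ^ α))) (Ioi 0) := by
  have base : IntegrableOn (fun x : ℝ => x ^ (α - 1) * Real.exp (-t₀ * x)) (Ioi 0) := by
    have := integrableOn_rpow_mul_exp_neg_mul_rpow (by linarith : (-1:ℝ) < α - 1) one_pos ht₀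
    refine this.congr_fun (fun x hx => ?_) measurableSet_Ioi
    simp only [Real.rpow_one]
  refine Integrable.mono' (base.const_mul α) ?_ ?_
  · apply Measurable.aestronglyMeasurable
    fun_prop
  · rw [ae_restrict_iff' measurableSet_Ioi]
    filter_upwards with x hx
    have h0 : (0:ℝ) ≤ x ^ (α - 1) := Real.rpow_nonneg (le_of_lt hx) _
    have h1 : Real.exp (-t₀ * x - x ^ α) ≤ Real.exp (-t₀ * x) := by
      apply Real.exp_le_exp.2
      have : (0:ℝ) ≤ x ^ α := Real.rpow_nonneg (le_of_lt hx) _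
      linarith
    rw [norm_eq_abs, abs_of_nonneg (by positivity)]
    exact mul_le_mul_of_nonneg_left (mul_le_mul_of_nonneg_left h1 h0) hα.le

lemma ibp {t₀ α : ℝ} (ht₀ : 0 < t₀) (hα : 0 < α) :
    ∫ x in Ioi (0:ℝ), t₀ * Real.exp (-t₀ * x) * (1 - Real.exp (-(x ^ α))) =
      ∫ x in Ioi (0:ℝ), α * (x ^ (α - 1) * Real.exp (-t₀ * x - x ^ α)) := by
  set g₁ : ℝ → ℝ := fun x => t₀ * Real.exp (-t₀ * x) * (1 - Real.exp (-(x ^ α))) with hg₁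
  set g₂ : ℝ → ℝ := fun x => α * (x ^ (α - 1) * Real.exp (-t₀ * x - x ^ α)) with hg₂
  have i₁ := g1_int ht₀ hα
  have i₂ := g2_int ht₀ hα
  set F : ℝ → ℝ := fun x => (Real.exp (-(x ^ α)) - 1) * Real.exp (-t₀ * x) with hF
  have hF0 : F 0 = 0 := by
    simp [hF, Real.zero_rpow hα.ne']
  have hderiv : ∀ x ∈ Ioi (0:ℝ), HasDerivAt F (g₁ x - g₂ x) x := by
    intro x hx
    have h1 : HasDerivAt (fun y : ℝ => y ^ α) (α * x ^ (α - 1)) x :=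
      Real.hasDerivAt_rpow_const (Or.inl (ne_of_gt hx))
    have h3 : HasDerivAt (fun y : ℝ => Real.exp (-(y ^ α)) - 1)
        (Real.exp (-(x ^ α)) * -(α * x ^ (α - 1))) x := (h1.neg.exp).sub_const 1
    have h5 : HasDerivAt (fun y : ℝ => -t₀ * y) (-t₀) x := by
      simpa using (hasDerivAt_id x).const_mul (-t₀)
    have h7 := h3.mul h5.exp
    refine HasDerivAt.congr_deriv (f := F) h7 ?_
    have he : -t₀ * x - x ^ α = -(x ^ α) + -t₀ * x := by ring
    simp only [hg₁, hg₂, he, Real.exp_add]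
    ring
  have hcont : ContinuousWithinAt F (Ici 0) 0 := by
    apply ContinuousAt.continuousWithinAt
    have c1 : ContinuousAt (fun y : ℝ => y ^ α) 0 :=
      Real.continuousAt_rpow_const 0 α (Or.inr hα.le)
    exact ((c1.neg.rexp).sub continuousAt_const).mul ((continuousAt_const.mul continuousAt_id).rexp)
  have htends : Tendsto F atTop (𝓝 0) := by
    apply squeeze_zero_norm' (a := fun x => Real.exp (-t₀ * x))
    · filter_upwards [eventually_ge_atTop (0:ℝ)] with x hx
      have h1 : Real.exp (-(x ^ α)) ≤ 1 := by
        rw [Real.exp_le_one_iff]; simp [Real.rpow_nonneg hx]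
      have h2 := Real.exp_pos (-(x ^ α))
      rw [hF, norm_eq_abs, abs_mul, abs_of_pos (Real.exp_pos _)]
      have : |Real.exp (-(x ^ α)) - 1| ≤ 1 := abs_le.2 ⟨by linarith, by linarith⟩
      nlinarith [Real.exp_pos (-t₀ * x)]
    · have h : Tendsto (fun x : ℝ => Real.exp (-(t₀ * x))) atTop (𝓝 0) :=
        Real.tendsto_exp_neg_atTop_nhds_zero.comp (Tendsto.const_mul_atTop ht₀ tendsto_id)
      exact h.congr (fun x => by rw [neg_mul])
  have key : ∫ x in Ioi (0:ℝ), (g₁ x - g₂ x) = 0 - F 0 :=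
    integral_Ioi_of_hasDerivAt_of_tendsto hcont hderiv (i₁.sub i₂) htends
  rw [hF0, sub_zero, integral_sub i₁ i₂] at key
  linarith

/-- For `ξ < 0`, `σ > 0`, `k > 0`, if `X` is a positive random
variable with distribution function `L_{1,ξ}(·; μ, σ)`, then the `k`-th moment of
`X` exists and `E(X^k) = e^{k(μ - σ/ξ)} M_Y(kσ/|ξ|; 1/|ξ|)`. -/
theorem stmt_5 {Ω : Type*} [MeasurableSpace Ω] (P : Measure Ω) [IsProbabilityMeasure P]
    (ξ μ σ k : ℝ) (hξ : ξ < 0) (hσ : 0 < σ) (hk : 0 < k)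
    (X : Ω → ℝ) (hXm : Measurable X) (hXpos : ∀ ω, 0 < X ω)
    (hdf : ∀ x : ℝ, (P {ω | X ω ≤ x}).toReal = L1 ξ μ σ x) :
    Integrable (fun ω => X ω ^ k) P ∧
      ∫ ω, X ω ^ k ∂P =
        Real.exp (k * (μ - σ / ξ)) * weibullMgf (k * σ / |ξ|) (1 / |ξ|) := by
  have hξ' : (0:ℝ) < -ξ := by linarith
  set b : ℝ := σ / (-ξ) with hbdef
  have hb : 0 < b := div_pos hσ hξ'
  set α : ℝ := (-ξ)⁻¹ with hαdef
  have hα : 0 < α := inv_pos.2 hξ'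
  set t₀ : ℝ := k * b with ht₀def
  have ht₀ : 0 < t₀ := mul_pos hk hb
  set C : ℝ := Real.exp (k * (μ + b)) with hCdef
  have hC : 0 < C := Real.exp_pos _
  have hξσb : (ξ / σ) * b = -1 := by
    rw [hbdef]; field_simp; rw [div_self hξ.ne]
  have hexpα : (-1 : ℝ) / ξ = α := by
    rw [hαdef, inv_neg, neg_div, one_div]
  -- key pointwise evaluation A
  have keyA : ∀ x : ℝ, 0 < x →
      L1 ξ μ σ ((C * Real.exp (-t₀ * x)) ^ (k⁻¹ : ℝ)) = Real.exp (-(x ^ α)) := by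
    intro x hx
    set u : ℝ := (C * Real.exp (-t₀ * x)) ^ (k⁻¹ : ℝ) with hudef
    have hu : 0 < u := Real.rpow_pos_of_pos (by positivity) _
    have hlogu : Real.log u = μ + b - b * x := by
      rw [hudef, Real.log_rpow (by positivity), hCdef, Real.log_mul (Real.exp_pos _).ne'
        (Real.exp_pos _).ne', Real.log_exp, Real.log_exp, ht₀def]
      field_simp
      ring
    have harg : 1 + (ξ / σ) * Real.log (Real.exp (-μ) * u) = x := by
      rw [Real.log_mul (Real.exp_pos _).ne' hu.ne', Real.log_exp, hlogu]
      have h2 : (ξ / σ) * (-μ + (μ + b - b * x)) = ((ξ / σ) * b) * (1 - x) := by ring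
      rw [h2, hξσb]; ring
    rw [L1, if_pos hu, harg, if_pos hx, hexpα]
  -- key pointwise evaluation B
  have keyB : ∀ t : ℝ, 0 < t → C ≤ t → L1 ξ μ σ (t ^ (k⁻¹ : ℝ)) = 1 := by
    intro t ht hCt
    have hu : (0:ℝ) < t ^ (k⁻¹ : ℝ) := Real.rpow_pos_of_pos ht _
    have hlog : Real.log (Real.exp (-μ) * t ^ (k⁻¹ : ℝ)) = -μ + k⁻¹ * Real.log t := by
      rw [Real.log_mul (Real.exp_pos _).ne' hu.ne', Real.log_exp, Real.log_rpow ht]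
    have hlogC : Real.log C = k * (μ + b) := by rw [hCdef, Real.log_exp]
    have hge : b ≤ -μ + k⁻¹ * Real.log t := by
      have h1 : Real.log C ≤ Real.log t := Real.log_le_log hC hCt
      rw [hlogC] at h1
      have h2 : k * (μ + b) * k⁻¹ ≤ Real.log t * k⁻¹ :=
        mul_le_mul_of_nonneg_right h1 (by positivity)
      rw [mul_comm k (μ + b), mul_assoc, mul_inv_cancel₀ hk.ne', mul_one] at h2
      linarith [h2]
    have hξσ : ξ / σ < 0 := div_neg_of_neg_of_pos hξ hσ
    have hle : 1 + (ξ / σ) * Real.log (Real.exp (-μ) * t ^ (k⁻¹ : ℝ)) ≤ 0 := by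
      rw [hlog]
      nlinarith [mul_nonneg (sub_nonneg.2 hge) (le_of_lt (neg_pos.2 hξσ))]
    rw [L1, if_pos hu, if_neg (not_lt.2 hle), if_neg (not_lt.2 hξ.le)]
  -- L1 at the right endpoint
  have hL1top : L1 ξ μ σ (Real.exp (μ + b)) = 1 := by
    have h1 : Real.log (Real.exp (-μ) * Real.exp (μ + b)) = b := by
      rw [← Real.exp_add, Real.log_exp]; ring
    rw [L1, if_pos (Real.exp_pos _), h1]
    have h2 : 1 + (ξ / σ) * b = 0 := by rw [hξσb]; ring
    rw [h2, if_neg (lt_irrefl 0), if_neg (not_lt.2 hξ.le)]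
  -- X is a.s. bounded
  have hms : ∀ r : ℝ, MeasurableSet {ω | X ω ≤ r} := fun r => hXm measurableSet_Iic
  have hXle : ∀ᵐ ω ∂P, X ω ≤ Real.exp (μ + b) := by
    have h2 : P {ω | X ω ≤ Real.exp (μ + b)} = 1 := by
      rw [← ENNReal.toReal_eq_one_iff, hdf, hL1top]
    rw [ae_iff]
    have h3 : {ω | ¬ X ω ≤ Real.exp (μ + b)} = {ω | X ω ≤ Real.exp (μ + b)}ᶜ := rfl
    rw [h3, prob_compl_eq_one_sub (hms _), h2, tsub_self]
  -- integrability
  have hmeas : Measurable (fun ω => X ω ^ k) := by fun_prop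
  have hint : Integrable (fun ω => X ω ^ k) P := by
    refine Integrable.mono' (integrable_const (Real.exp (μ + b) ^ (k:ℝ)))
      hmeas.aestronglyMeasurable ?_
    filter_upwards [hXle] with ω hω
    rw [norm_eq_abs, abs_of_nonneg (Real.rpow_nonneg (hXpos ω).le k)]
    exact Real.rpow_le_rpow (hXpos ω).le hω hk.le
  refine ⟨hint, ?_⟩
  -- tail probability formula
  have hPt : ∀ t : ℝ, t ∈ Ioi (0:ℝ) →
      (P {a | t < X a ^ k}).toReal = 1 - L1 ξ μ σ (t ^ (k⁻¹ : ℝ)) := by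
    intro t ht
    rw [mem_Ioi] at ht
    have hset : {a | t < X a ^ k} = {a | X a ≤ t ^ (k⁻¹ : ℝ)}ᶜ := by
      ext ω
      simp only [mem_setOf_eq, mem_compl_iff, not_le]
      constructor
      · intro h
        by_contra hc
        push_neg at hc
        have := (Real.le_rpow_inv_iff_of_pos (hXpos ω).le ht.le hk).1 hc
        linarith
      · intro h
        by_contra hc
        push_neg at hc
        have := (Real.le_rpow_inv_iff_of_pos (hXpos ω).le ht.le hk).2 hc
        linarith
    rw [hset, prob_compl_eq_one_sub (hms _),
      ENNReal.toReal_sub_of_le prob_le_one ENNReal.one_ne_top, ENNReal.toReal_one, hdf]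
  have hnn : 0 ≤ᵐ[P] fun ω => X ω ^ k :=
    Eventually.of_forall fun ω => Real.rpow_nonneg (hXpos ω).le k
  rw [hint.integral_eq_integral_meas_lt hnn]
  -- restrict to (0, C)
  have step1 : ∫ t in Ioi (0:ℝ), (P {a | t < X a ^ k}).toReal
      = ∫ t in Ioi (0:ℝ), indicator (Ioo 0 C) (fun t => 1 - L1 ξ μ σ (t ^ (k⁻¹ : ℝ))) t := by
    apply setIntegral_congr_fun measurableSet_Ioi
    intro t ht
    show (P {a | t < X a ^ k}).toReal = (Ioo 0 C).indicator (fun t => 1 - L1 ξ μ σ (t ^ (k⁻¹:ℝ))) t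
    rw [hPt t ht]
    by_cases hc : t < C
    · rw [Set.indicator_of_mem (mem_Ioo.mpr ⟨mem_Ioi.mp ht, hc⟩)]
    · rw [indicator_of_notMem (fun h => hc h.2), keyB t ht (not_lt.1 hc)]
      ring
  simp only [measureReal_def]
  rw [step1, setIntegral_indicator measurableSet_Ioo,
    inter_eq_self_of_subset_right Ioo_subset_Ioi_self]
  -- substitution t = C * exp (-t₀ x)
  have himg : Ioo (0:ℝ) C = (fun x => C * Real.exp (-t₀ * x)) '' Ioi 0 := by
    ext y
    constructor
    · rintro ⟨hy1, hy2⟩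
      refine ⟨(Real.log C - Real.log y) / t₀, ?_, ?_⟩
      · have : Real.log y < Real.log C := Real.log_lt_log hy1 hy2
        exact div_pos (by linarith) ht₀
      · show C * Real.exp (-t₀ * ((Real.log C - Real.log y) / t₀)) = y
        have h1 : -t₀ * ((Real.log C - Real.log y) / t₀) = Real.log y - Real.log C := by
          field_simp
          ring
        rw [h1, Real.exp_sub, Real.exp_log hy1, Real.exp_log hC]
        field_simp
    · rintro ⟨x, hx, rfl⟩
      rw [mem_Ioi] at hx
      simp only [mem_Ioo]
      constructor
      · positivity
      · have h1 : Real.exp (-t₀ * x) < 1 := by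
          rw [Real.exp_lt_one_iff]
          nlinarith
        have h2 := mul_lt_mul_of_pos_left h1 hC
        simpa using h2
  have hφd : ∀ x ∈ Ioi (0:ℝ), HasDerivWithinAt (fun x => C * Real.exp (-t₀ * x))
      (C * (Real.exp (-t₀ * x) * -t₀)) (Ioi 0) x := by
    intro x hx
    have h5 : HasDerivAt (fun y : ℝ => -t₀ * y) (-t₀) x := by
      simpa using (hasDerivAt_id x).const_mul (-t₀)
    exact ((h5.exp).const_mul C).hasDerivWithinAt
  have hφinj : InjOn (fun x => C * Real.exp (-t₀ * x)) (Ioi 0) := by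
    intro a _ bb _ h
    simp only at h
    have h2 : Real.exp (-t₀ * a) = Real.exp (-t₀ * bb) := mul_left_cancel₀ hC.ne' h
    have h3 := Real.exp_injective h2
    exact mul_left_cancel₀ (neg_ne_zero.2 ht₀.ne') h3
  rw [himg, integral_image_eq_integral_abs_deriv_smul measurableSet_Ioi hφd hφinj]
  have step2 : ∫ x in Ioi (0:ℝ), |C * (Real.exp (-t₀ * x) * -t₀)| •
        (1 - L1 ξ μ σ ((C * Real.exp (-t₀ * x)) ^ (k⁻¹ : ℝ)))
      = ∫ x in Ioi (0:ℝ), C * (t₀ * Real.exp (-t₀ * x) * (1 - Real.exp (-(x ^ α)))) := by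
    apply setIntegral_congr_fun measurableSet_Ioi
    intro x hx
    rw [mem_Ioi] at hx
    have habs : |C * (Real.exp (-t₀ * x) * -t₀)| = C * t₀ * Real.exp (-t₀ * x) := by
      rw [show C * (Real.exp (-t₀ * x) * -t₀) = -(C * t₀ * Real.exp (-t₀ * x)) by ring,
        abs_neg, abs_of_nonneg (by positivity)]
    simp only [smul_eq_mul]
    rw [keyA x hx, habs]
    ring
  rw [step2, integral_const_mul, ibp ht₀ hα, integral_const_mul]
  -- identify constants
  have habsξ : |ξ| = -ξ := abs_of_neg hξ
  have h1 : 1 / |ξ| = α := by rw [habsξ, hαdef, one_div]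
  have h2 : k * σ / |ξ| = t₀ := by
    rw [habsξ, ht₀def, hbdef, mul_div_assoc]
  have h3 : k * (μ - σ / ξ) = k * (μ + b) := by
    rw [hbdef, div_neg]
    ring
  rw [weibullMgf, h1, h2, h3, ← hCdef]
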